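/- Let M be a DFA over a finite alphabet Σ with finitely many states. Suppose that for every state q of M and all words u, v with reading u from q returning to q and reading v from q returning to q, u is a prefix of v or v is a prefix of u. Then the language accepted by M is bounded: there exist finitely many words w₁, …, wₙ over Σ such that L(M) ⊆ w₁*·w₂*·⋯·wₙ*. -/

import Mathlib

open Computability

/-- The product of Kleene stars of singletons `w₁*·w₂*·⋯·wₙ*`. -/
def prodStars {A : Type*} (ws : List (List A)) : Language A :=
  (ws.map fun w => ({w} : Language A)∗).prod

section Aux

variable {A : Type*}

lemma prodStars_nil : prodStars ([] : List (List A)) = 1 := rfl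

lemma prodStars_cons (w : List A) (ws : List (List A)) :
    prodStars (w :: ws) = ({w} : Language A)∗ * prodStars ws := by
  simp [prodStars]

lemma nil_mem_prodStars (ws : List (List A)) : [] ∈ prodStars ws := by
  induction ws with
  | nil => exact Language.nil_mem_one
  | cons w ws ih =>
      rw [prodStars_cons]
      exact Language.append_mem_mul (Language.nil_mem_kstar _) ih

lemma prodStars_append (ws₁ ws₂ : List (List A)) :
    prodStars (ws₁ ++ ws₂) = prodStars ws₁ * prodStars ws₂ := by
  simp [prodStars]

lemma prodStars_le_append_left (ws₁ ws₂ : List (List A)) :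
    prodStars ws₁ ≤ prodStars (ws₁ ++ ws₂) := by
  rw [prodStars_append]
  intro x hx
  have := Language.append_mem_mul hx (nil_mem_prodStars ws₂)
  rw [List.append_nil] at this; exact this

lemma prodStars_le_append_right (ws₁ ws₂ : List (List A)) :
    prodStars ws₂ ≤ prodStars (ws₁ ++ ws₂) := by
  rw [prodStars_append]
  intro x hx
  have := Language.append_mem_mul (nil_mem_prodStars ws₁) hx
  rw [List.nil_append] at this; exact this

lemma prodStars_le_flatten (Ls : List (List (List A))) :
    ∀ l ∈ Ls, prodStars l ≤ prodStars Ls.flatten := by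
  induction Ls with
  | nil => simp
  | cons l₀ Ls ih =>
      intro l hl
      rcases List.mem_cons.mp hl with rfl | hl
      · simpa using prodStars_le_append_left l Ls.flatten
      · exact le_trans (ih l hl) (by simpa using prodStars_le_append_right l₀ Ls.flatten)

/-- All lists over elements of `xs` of length at most `n`. -/
def allLists (xs : List A) : ℕ → List (List A)
  | 0 => [[]]
  | n + 1 => [] :: (xs.flatMap fun b => (allLists xs n).map (b :: ·))

lemma mem_allLists (xs : List A) : ∀ n (l : List A), l.length ≤ n → (∀ x ∈ l, x ∈ xs) →
    l ∈ allLists xs n := by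
  intro n
  induction n with
  | zero => intro l hl _; simp at hl; simp [allLists, hl]
  | succ n ih =>
      intro l hl hmem
      cases l with
      | nil => simp [allLists]
      | cons b t =>
          simp only [allLists, List.mem_cons, List.mem_flatMap, List.mem_map]
          right
          exact ⟨b, hmem b (by simp), t, ih t (by simpa using hl) (fun x hx => hmem x (by simp [hx])), rfl⟩

end Aux

section DFAAux

variable {A σ : Type*} (M : DFA A σ)

lemma exists_primitive_cycle
    (h : ∀ (q : σ) (u v : List A),
      M.evalFrom q u = q → M.evalFrom q v = q → u <+: v ∨ v <+: u) (q : σ) :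
    ∃ c : List A, ∀ u, M.evalFrom q u = q → u ∈ ({c} : Language A)∗ := by
  classical
  by_cases hq : ∃ u : List A, u ≠ [] ∧ M.evalFrom q u = q
  · have hex : ∃ n, ∃ u : List A, (u ≠ [] ∧ M.evalFrom q u = q) ∧ u.length = n := by
      obtain ⟨u, hu⟩ := hq; exact ⟨u.length, u, hu, rfl⟩
    obtain ⟨c, ⟨hcne, hcyc⟩, hclen⟩ := Nat.find_spec hex
    have hmin : ∀ v : List A, v ≠ [] → M.evalFrom q v = q → c.length ≤ v.length := by
      intro v hv hv'
      rw [hclen]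
      exact Nat.find_min' hex ⟨v, ⟨hv, hv'⟩, rfl⟩
    refine ⟨c, ?_⟩
    have key : ∀ n (u : List A), u.length ≤ n → M.evalFrom q u = q →
        u ∈ ({c} : Language A)∗ := by
      intro n
      induction n with
      | zero =>
          intro u hu _
          simp only [Nat.le_zero, List.length_eq_zero_iff] at hu
          subst hu; exact Language.nil_mem_kstar _
      | succ n ih =>
          intro u hu hcycu
          rcases eq_or_ne u [] with rfl | hune
          · exact Language.nil_mem_kstar _
          rcases h q c u hcyc hcycu with hpre | hpre
          · obtain ⟨t, rfl⟩ := hpre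
            have ht : M.evalFrom q t = q := by
              rw [DFA.evalFrom_of_append, hcyc] at hcycu; exact hcycu
            have hcpos : 0 < c.length := List.length_pos_iff.mpr hcne
            have htlen : t.length ≤ n := by
              rw [List.length_append] at hu; omega
            have := ih t htlen ht
            rw [Language.mem_kstar] at this ⊢
            obtain ⟨L, rfl, hL⟩ := this
            exact ⟨c :: L, rfl, by
              intro y hy
              rcases List.mem_cons.mp hy with rfl | hy
              · rfl
              · exact hL y hy⟩
          · have : u = c := hpre.eq_of_length
              (le_antisymm hpre.length_le (hmin u hune hcycu))
            subst this
            rw [Language.mem_kstar]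
            exact ⟨[u], by simp, by simp; rfl⟩
    exact fun u hu => key u.length u le_rfl hu
  · push_neg at hq
    refine ⟨[], fun u hu => ?_⟩
    rcases eq_or_ne u [] with rfl | hne
    · exact Language.nil_mem_kstar _
    · exact absurd hu (hq u hne)

lemma decomp [DecidableEq σ] (c : σ → List A)
    (hc : ∀ q u, M.evalFrom q u = q → u ∈ ({c q} : Language A)∗) :
    ∀ n (s : Finset σ), s.card ≤ n → ∀ (q : σ) (u : List A),
      (∀ k, k ≤ u.length → M.evalFrom q (u.take k) ∈ s) →
      ∃ l : List (σ ⊕ A), l.length ≤ 2 * n + 1 ∧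
        u ∈ prodStars (l.map (Sum.elim c fun a => [a])) := by
  intro n
  induction n with
  | zero =>
      intro s hs q u hvis
      have hq : q ∈ s := by simpa using hvis 0 (Nat.zero_le _)
      have : s = ∅ := Finset.card_eq_zero.mp (Nat.le_zero.mp hs)
      simp [this] at hq
  | succ n ih =>
      intro s hs q u hvis
      have hq : q ∈ s := by simpa using hvis 0 (Nat.zero_le _)
      classical
      set K : Finset ℕ := (Finset.range (u.length + 1)).filter
        (fun k => M.evalFrom q (u.take k) = q) with hK
      have hKne : K.Nonempty := ⟨0, by simp [hK]⟩
      set kmax := K.max' hKne with hkmax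
      have hkmem : kmax ∈ K := K.max'_mem hKne
      have hkle : kmax ≤ u.length := by
        have := (Finset.mem_filter.mp hkmem).1
        simpa [Nat.lt_succ_iff] using this
      have hpcyc : M.evalFrom q (u.take kmax) = q := (Finset.mem_filter.mp hkmem).2
      have hpstar : u.take kmax ∈ ({c q} : Language A)∗ := hc q _ hpcyc
      rcases hrest : u.drop kmax with _ | ⟨a, rest'⟩
      · -- u = u.take kmax, a pure cycle
        refine ⟨[Sum.inl q], by simp, ?_⟩
        have : u = u.take kmax := by
          conv_lhs => rw [← List.take_append_drop kmax u]
          simp [hrest]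
        rw [this]
        simpa [prodStars] using hpstar
      · -- u = take kmax ++ a :: rest'
        have hulen : u.length = kmax + rest'.length + 1 := by
          have := List.take_append_drop kmax u
          have h2 := congrArg List.length this
          simp [hrest, List.length_take, min_eq_left hkle] at h2
          omega
        set q' := M.step q a with hq'
        have hseg : ∀ k, k ≤ rest'.length →
            M.evalFrom q' (rest'.take k) = M.evalFrom q (u.take (kmax + (k + 1))) := by
          intro k hk
          have htake : u.take (kmax + (k + 1)) = u.take kmax ++ a :: rest'.take k := by
            rw [List.take_add, hrest]
            simp
          rw [htake, DFA.evalFrom_of_append, hpcyc]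
          simp [DFA.evalFrom, hq']
        have hinv : ∀ k, k ≤ rest'.length →
            M.evalFrom q' (rest'.take k) ∈ s.erase q := by
          intro k hk
          have hle : kmax + (k + 1) ≤ u.length := by omega
          rw [hseg k hk]
          refine Finset.mem_erase.mpr ⟨?_, hvis _ hle⟩
          intro hcon
          have : kmax + (k + 1) ∈ K := by
            simp only [hK, Finset.mem_filter, Finset.mem_range]
            exact ⟨by omega, hcon⟩
          have := Finset.le_max' K _ this
          omega
        have hcard : (s.erase q).card ≤ n := by
          have := Finset.card_erase_of_mem hq
          omega
        obtain ⟨l', hl'len, hl'mem⟩ := ih (s.erase q) hcard q' rest' hinv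
        refine ⟨Sum.inl q :: Sum.inr a :: l', by simp; omega, ?_⟩
        have hu : u = u.take kmax ++ ([a] ++ rest') := by
          conv_lhs => rw [← List.take_append_drop kmax u]
          simp [hrest]
        rw [hu]
        simp only [List.map_cons, Sum.elim_inl, Sum.elim_inr, prodStars_cons]
        refine Language.append_mem_mul hpstar (Language.append_mem_mul ?_ hl'mem)
        rw [Language.mem_kstar]
        exact ⟨[[a]], by simp, by simp; rfl⟩

end DFAAux

/-- If all cycle words at each state are pairwise prefix-comparable,
then the accepted language is bounded. -/
theorem accepts_bounded_of_comparable_cycles {A σ : Type*} [Fintype A] [Fintype σ]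
    (M : DFA A σ)
    (h : ∀ (q : σ) (u v : List A),
      M.evalFrom q u = q → M.evalFrom q v = q → u <+: v ∨ v <+: u) :
    ∃ ws : List (List A), M.accepts ≤ prodStars ws := by
  classical
  choose c hc using exists_primitive_cycle M h
  set word : σ ⊕ A → List A := Sum.elim c fun a => [a] with hword
  set N := Fintype.card σ with hN
  set xs : List (σ ⊕ A) := (Finset.univ : Finset (σ ⊕ A)).toList with hxs
  set Ls : List (List (List A)) :=
    (allLists xs (2 * N + 1)).map (fun l => l.map word) with hLs
  refine ⟨Ls.flatten, ?_⟩
  intro x hx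
  obtain ⟨l, hlen, hmem⟩ := decomp M c hc N Finset.univ (by simp [hN]) M.start x
    (fun k _ => Finset.mem_univ _)
  have hl : l ∈ allLists xs (2 * N + 1) :=
    mem_allLists xs _ l hlen (fun y _ => by simp [hxs])
  have : l.map word ∈ Ls := List.mem_map.mpr ⟨l, hl, rfl⟩
  exact prodStars_le_flatten Ls _ this hmem
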